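/- Let ξ be a positive semidefinite operator on A ⊗ B with partial trace ξ^B = tr_A(ξ). Then tr[ξ²] ≤ |A| · tr[(ξ^B)²]. -/

import Mathlib

open Matrix Kronecker
open scoped ComplexOrder

/-- The square root of a positive semidefinite matrix, as defined in Mathlib (Dec 2024),
since removed from Mathlib. -/
noncomputable def Matrix.PosSemidef.sqrt {n : Type*} [Fintype n] [DecidableEq n]
    {A : Matrix n n ℂ} (hA : A.PosSemidef) : Matrix n n ℂ :=
  (hA.1.eigenvectorUnitary : Matrix n n ℂ) *
    diagonal (fun i => ((Real.sqrt (hA.1.eigenvalues i) : ℝ) : ℂ)) *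
  (star hA.1.eigenvectorUnitary : Matrix n n ℂ)

noncomputable def traceNorm {n m : Type*} [Fintype n] [Fintype m] [DecidableEq m]
    (M : Matrix n m ℂ) : ℝ :=
  ((Matrix.posSemidef_conjTranspose_mul_self M).sqrt.trace).re

noncomputable def ptraceFst {a b : Type*} [Fintype a]
    (M : Matrix (a × b) (a × b) ℂ) : Matrix b b ℂ :=
  Matrix.of fun i j => ∑ k, M (k, i) (k, j)

noncomputable def ptraceSnd {a b : Type*} [Fintype b]
    (M : Matrix (a × b) (a × b) ℂ) : Matrix a a ℂ :=
  Matrix.of fun i j => ∑ k, M (i, k) (j, k)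

lemma psd_trace_re_nonneg {n : Type*} [Fintype n] {A : Matrix n n ℂ} (hA : A.PosSemidef) :
    0 ≤ A.trace.re := by
  classical
  have h : 0 ≤ A.trace := by
    rw [Matrix.trace]
    apply Finset.sum_nonneg
    intro i _
    have := hA.dotProduct_mulVec_nonneg (fun j => if j = i then (1:ℂ) else 0)
    simpa [Matrix.mulVec, dotProduct, apply_ite, Matrix.diag] using this
  exact (Complex.le_def.mp h).1

open scoped MatrixOrder in
lemma trace_mul_psd_re_nonneg {n : Type*} [Fintype n] {A B : Matrix n n ℂ}
    (hA : A.PosSemidef) (hB : B.PosSemidef) : 0 ≤ ((A * B).trace).re := by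
  classical
  have h1 : A * B = CFC.sqrt A * (CFC.sqrt A * B) := by
    rw [← Matrix.mul_assoc, CFC.sqrt_mul_sqrt_self A hA.nonneg]
  have h2 : (A * B).trace = (CFC.sqrt A * B * CFC.sqrt A).trace := by
    rw [h1, Matrix.trace_mul_comm, Matrix.mul_assoc]
  rw [h2]
  have h3 : (CFC.sqrt A * B * CFC.sqrt A).PosSemidef := by
    have := hB.mul_mul_conjTranspose_same (CFC.sqrt A)
    rwa [(CFC.sqrt_nonneg A).posSemidef.1.eq] at this
  exact psd_trace_re_nonneg h3

lemma block_psd {a b : Type*} [Fintype a] [Fintype b] [DecidableEq a]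
    (ξ : Matrix (a × b) (a × b) ℂ) (hξ : ξ.PosSemidef) (k : a) :
    (Matrix.of fun i j => ξ (k, i) (k, j) : Matrix b b ℂ).PosSemidef := by
  refine Matrix.PosSemidef.of_dotProduct_mulVec_nonneg ?_ ?_
  · ext i j
    simpa [Matrix.conjTranspose_apply] using congrFun (congrFun hξ.1 (k, i)) (k, j)
  · intro x
    have key := hξ.dotProduct_mulVec_nonneg (fun p : a × b => if p.1 = k then x p.2 else 0)
    have heq : dotProduct (star (fun p : a × b => if p.1 = k then x p.2 else 0))
        (ξ *ᵥ (fun p => if p.1 = k then x p.2 else 0)) =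
        dotProduct (star x) ((Matrix.of fun i j => ξ (k, i) (k, j)) *ᵥ x) := by
      simp only [dotProduct, Matrix.mulVec, Pi.star_apply, Fintype.sum_prod_type,
        apply_ite, star_zero, ite_mul, mul_ite, zero_mul, mul_zero,
        Finset.sum_ite_eq, Finset.sum_ite_eq', Finset.mem_univ, if_true, Matrix.of_apply]
      simp [dotProduct, Finset.sum_ite_eq']
    rwa [heq] at key

lemma sum_dd {a : Type*} [Fintype a] [DecidableEq a] (s t : a) :
    ∑ k : a, ∑ l : a, ((if s = k then (1:ℂ) else 0) - (if s = l then 1 else 0)) *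
      ((if t = k then 1 else 0) - (if t = l then 1 else 0)) =
    2 * (Fintype.card a : ℂ) * (if s = t then 1 else 0) - 2 := by
  simp only [sub_mul, mul_sub, Finset.sum_sub_distrib, ite_mul, mul_ite, one_mul, mul_one,
    zero_mul, mul_zero, Finset.sum_ite_eq, Finset.sum_ite_eq', Finset.mem_univ, if_true,
    Finset.sum_const, Finset.card_univ, nsmul_eq_mul]
  by_cases h : s = t <;> simp [h, eq_comm] <;> ring


/-- For positive semidefinite `ξ` on `A ⊗ B`, `tr[ξ²] ≤ |A| tr[(ξ^B)²]`. -/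
theorem trace_sq_le_card_mul_trace_sq_ptrace
    {a b : Type*} [Fintype a] [Fintype b]
    (ξ : Matrix (a × b) (a × b) ℂ) (hξ : ξ.PosSemidef) :
    ((ξ * ξ).trace).re ≤ (Fintype.card a : ℝ) * ((ptraceFst ξ * ptraceFst ξ).trace).re := by
  classical
  set n : ℕ := Fintype.card a with hn
  set M : a → Matrix b b ℂ := fun k => Matrix.of fun i j => ξ (k, i) (k, j) with hM
  have hMpsd : ∀ k, (M k).PosSemidef := fun k => block_psd ξ hξ k
  have hPT : ptraceFst ξ = ∑ k, M k := by
    ext i j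
    simp [ptraceFst, hM, Matrix.sum_apply]
  set d : a → a → (a × b) → ℂ :=
    fun k l p => (if p.1 = k then 1 else 0) - (if p.1 = l then 1 else 0) with hd
  set S : a → a → Matrix (a × b) (a × b) ℂ := fun k l => Matrix.diagonal (d k l) with hS
  have hSH : ∀ k l, (S k l)ᴴ = S k l := by
    intro k l
    have hstar : star (d k l) = d k l := by
      funext p
      simp only [Pi.star_apply, hd, star_sub, apply_ite (star : ℂ → ℂ), star_one, star_zero]
    rw [hS]
    rw [Matrix.diagonal_conjTranspose, hstar]
  have hconj : ∀ k l, (S k l * ξ * S k l).PosSemidef := by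
    intro k l
    have := hξ.mul_mul_conjTranspose_same (S k l)
    rwa [hSH] at this
  -- the diagonal compression of ξ
  set Dm : Matrix (a × b) (a × b) ℂ :=
    Matrix.of (fun p q => if p.1 = q.1 then ξ p q else 0) with hDm
  -- key matrix identity
  have hkey : ∑ k, ∑ l, S k l * ξ * S k l = (2 * (n : ℂ)) • Dm - (2 : ℂ) • ξ := by
    ext p q
    rw [Matrix.sum_apply]
    simp only [Matrix.sum_apply]
    have hterm : ∀ k l, (S k l * ξ * S k l) p q = (d k l p * d k l q) * ξ p q := by
      intro k l
      rw [hS]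
      simp only [Matrix.diagonal_mul, Matrix.mul_diagonal]
      ring
    simp only [hterm]
    simp only [← Finset.sum_mul]
    have := sum_dd (a := a) p.1 q.1
    rw [show (∑ k, ∑ l, d k l p * d k l q) = 2 * (n : ℂ) * (if p.1 = q.1 then 1 else 0) - 2 by
      simpa [hd] using this]
    simp only [Matrix.sub_apply, Matrix.smul_apply, hDm, Matrix.of_apply, smul_eq_mul]
    by_cases h : p.1 = q.1 <;> simp [h] <;> ring
  -- trace computation
  have htrace : (ξ * ((2 * (n : ℂ)) • Dm - (2 : ℂ) • ξ)).trace
      = 2 * (n : ℂ) * (ξ * Dm).trace - 2 * (ξ * ξ).trace := by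
    rw [Matrix.mul_sub, Matrix.trace_sub, Matrix.mul_smul, Matrix.trace_smul,
      Matrix.mul_smul, Matrix.trace_smul]
    simp [smul_eq_mul]
  have hnonneg : 0 ≤ ((ξ * ((2 * (n : ℂ)) • Dm - (2 : ℂ) • ξ)).trace).re := by
    rw [← hkey, Finset.mul_sum]
    simp only [Finset.mul_sum, Matrix.trace_sum, Complex.re_sum]
    apply Finset.sum_nonneg
    intro k _
    apply Finset.sum_nonneg
    intro l _
    exact trace_mul_psd_re_nonneg hξ (hconj k l)
  -- tr(ξ Dm) = ∑ₖ tr(Mₖ²)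
  have hDtrace : (ξ * Dm).trace = ∑ k, (M k * M k).trace := by
    simp only [Matrix.trace, Matrix.diag, Matrix.mul_apply, hDm, hM, Matrix.of_apply,
      Fintype.sum_prod_type, mul_ite, mul_zero]
    congr 1; funext k
    congr 1; funext i
    rw [Finset.sum_comm]
    simp
  -- deduce tr(ξ²).re ≤ n * ∑ₖ tr(Mₖ²).re
  have step1 : ((ξ * ξ).trace).re ≤ (n : ℝ) * (∑ k, (M k * M k).trace).re := by
    rw [htrace, hDtrace] at hnonneg
    have h2 : (2 * (n : ℂ)) = ((2 * (n : ℝ) : ℝ) : ℂ) := by push_cast; ring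
    have h3 : (2 : ℂ) = ((2 : ℝ) : ℂ) := by norm_num
    rw [h2, h3, Complex.sub_re, Complex.re_ofReal_mul, Complex.re_ofReal_mul] at hnonneg
    nlinarith [hnonneg]
  -- cross terms
  have hcross : ∀ k l, 0 ≤ ((M k * M l).trace).re :=
    fun k l => trace_mul_psd_re_nonneg (hMpsd k) (hMpsd l)
  have step2 : (∑ k, (M k * M k).trace).re ≤ ((ptraceFst ξ * ptraceFst ξ).trace).re := by
    rw [hPT, Finset.sum_mul_sum, Matrix.trace_sum]
    simp only [Matrix.trace_sum, Complex.re_sum]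
    apply Finset.sum_le_sum
    intro k _
    exact Finset.single_le_sum (fun l _ => hcross k l) (Finset.mem_univ k)
  calc ((ξ * ξ).trace).re ≤ (n : ℝ) * (∑ k, (M k * M k).trace).re := step1
    _ ≤ (n : ℝ) * ((ptraceFst ξ * ptraceFst ξ).trace).re := by
        apply mul_le_mul_of_nonneg_left step2 (by positivity)
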